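/- A fragment w[b..i-1] is an abelian run with period P if and only if it is an anchored run with period P (for some anchor) and for every residue k', B_{i-1}[k'] ≥ b and B_i[k'] > b. -/

import Mathlib

open scoped BigOperators

variable {α : Type*} [DecidableEq α] [Fintype α]

/-- Parikh vector of a word: counts of each letter. -/
def parikh (w : List α) (a : α) : ℕ := w.count a

/-- Componentwise containment of Parikh vectors. -/
def PSub (P Q : α → ℕ) : Prop := ∀ a, P a ≤ Q a

/-- Strict containment of Parikh vectors. -/
def PSSub (P Q : α → ℕ) : Prop := PSub P Q ∧ P ≠ Q

/-- Norm of a Parikh vector: sum of its components. -/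
def pnorm (P : α → ℕ) : ℕ := ∑ a, P a

/-- Fragment w[i..j] (both endpoints included). -/
def frag (w : List α) (i j : ℕ) : List α := (w.drop i).take (j + 1 - i)

/-- `IsPF P w k u` : w = u 0 ++ u 1 ++ ⋯ ++ u k is a periodic factorization of w
with respect to P: the cores u 1, …, u (k-1) have Parikh vector P and the head u 0
and tail u k have Parikh vector strictly contained in P. -/
def IsPF (P : α → ℕ) (w : List α) (k : ℕ) (u : ℕ → List α) : Prop :=
  1 ≤ k ∧ w = ((List.range (k + 1)).map u).flatten ∧
  (∀ i, 0 < i → i < k → parikh (u i) = P) ∧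
  PSSub (parikh (u 0)) P ∧ PSSub (parikh (u k)) P

/-- Fragment w[i..j] has abelian period P. -/
def HasPeriod (P : α → ℕ) (w : List α) (i j : ℕ) : Prop :=
  ∃ m u, IsPF P (frag w i j) m u

/-- Fragment w[i..j] has abelian period P anchored at k : there is a periodic
factorization whose cores start (within w) at positions ≡ k (mod |P|). -/
def HasAnchPeriod (P : α → ℕ) (w : List α) (i j k : ℕ) : Prop :=
  ∃ m u, IsPF P (frag w i j) m u ∧ (i + (u 0).length) % pnorm P = k % pnorm P

/-- Fragment w[i..j] is periodic with period P anchored at k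
(factorization with at least two cores). -/
def PeriodicAnch (P : α → ℕ) (w : List α) (i j k : ℕ) : Prop :=
  ∃ m u, 3 ≤ m ∧ IsPF P (frag w i j) m u ∧
    (i + (u 0).length) % pnorm P = k % pnorm P

/-- Fragment w[i..j] is periodic with period P (at least two cores, any anchor). -/
def APeriodic (P : α → ℕ) (w : List α) (i j : ℕ) : Prop :=
  ∃ m u, 3 ≤ m ∧ IsPF P (frag w i j) m u

/-- k-anchored abelian run with period P. -/
def AnchoredRun (P : α → ℕ) (w : List α) (i j k : ℕ) : Prop :=
  i ≤ j ∧ j < w.length ∧ PeriodicAnch P w i j k ∧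
  (i = 0 ∨ ¬ PeriodicAnch P w (i - 1) j k) ∧
  (j + 1 = w.length ∨ ¬ PeriodicAnch P w i (j + 1) k)

/-- Abelian run with period P. -/
def AbelianRun (P : α → ℕ) (w : List α) (i j : ℕ) : Prop :=
  i ≤ j ∧ j < w.length ∧ APeriodic P w i j ∧
  (i = 0 ∨ ¬ APeriodic P w (i - 1) j) ∧
  (j + 1 = w.length ∨ ¬ APeriodic P w i (j + 1))

/-- B_i[k]: the starting position of the longest suffix of w[0..i] having abelian
period P anchored at k (⊤ = ∞ if no such suffix exists). -/
noncomputable def Bfun (P : α → ℕ) (w : List α) (i k : ℕ) : ℕ∞ :=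
  sInf {b : ℕ∞ | ∃ s : ℕ, b = (s : ℕ∞) ∧ s ≤ i + 1 ∧ HasAnchPeriod P w s i k}

lemma pnorm_parikh (v : List α) : pnorm (parikh v) = v.length := by
  induction v with
  | nil => simp [pnorm, parikh]
  | cons x v ih =>
    simp only [pnorm, parikh] at *
    have : ∀ a : α, (x :: v).count a = v.count a + if a = x then 1 else 0 := by
      intro a; by_cases hax : a = x <;> simp [List.count_cons, hax] <;> exact Ne.symm hax
    simp only [this, Finset.sum_add_distrib, ih, Finset.sum_ite_eq', Finset.mem_univ, if_true]
    simp

lemma pssub_norm_lt {Q P : α → ℕ} (h : PSSub Q P) : pnorm Q < pnorm P := by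
  obtain ⟨hle, hne⟩ := h
  refine Finset.sum_lt_sum (fun a _ => hle a) ?_
  obtain ⟨a, ha⟩ := Function.ne_iff.mp hne
  exact ⟨a, Finset.mem_univ a, lt_of_le_of_ne (hle a) ha⟩

lemma pssub_of_le_of_lt {Q P : α → ℕ} (h1 : PSub Q P) (h2 : pnorm Q < pnorm P) : PSSub Q P :=
  ⟨h1, fun e => absurd (by rw [e]) h2.ne⟩

lemma pssub_piece {y z : List α} {P : α → ℕ} (hsub : y.Sublist z) (hz : PSub (parikh z) P)
    (hlen : y.length < pnorm P) : PSSub (parikh y) P :=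
  pssub_of_le_of_lt (fun a => le_trans (hsub.count_le a) (hz a)) (by rwa [pnorm_parikh])

lemma length_lt_of_pssub {t : List α} {P : α → ℕ} (h : PSSub (parikh t) P) :
    t.length < pnorm P := by
  have := pssub_norm_lt h; rwa [pnorm_parikh] at this

lemma join_cons' (c : List α) (cs : List (List α)) : (c :: cs).flatten = c ++ cs.flatten := rfl

lemma join_length {p : ℕ} {cs : List (List α)} (h : ∀ c ∈ cs, c.length = p) :
    cs.flatten.length = p * cs.length := by
  induction cs with
  | nil => simp
  | cons c cs ih =>
    simp only [join_cons', List.length_append, List.length_cons,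
      h c (by simp), ih (fun c hc => h c (by simp [hc]))]
    ring

lemma core_length {c : List α} {P : α → ℕ} (h : parikh c = P) : c.length = pnorm P := by
  rw [← h, pnorm_parikh]

lemma suffix_trans_le {l1 l2 l : List α} (h1 : l1 <:+ l) (h2 : l2 <:+ l)
    (h : l1.length ≤ l2.length) : l1 <:+ l2 := by
  rw [← List.reverse_prefix] at h1 h2 ⊢
  exact List.prefix_of_prefix_length_le h1 h2 (by simpa using h)

lemma suffix_split {y A B : List α} (h : y <:+ A ++ B) :
    (y <:+ B) ∨ ∃ A', A' <:+ A ∧ y = A' ++ B := by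
  rcases le_or_gt y.length B.length with hle | hlt
  · exact Or.inl (suffix_trans_le h (List.suffix_append A B) hle)
  · right
    obtain ⟨s, hs⟩ := h
    have hy : y = y.take (y.length - B.length) ++ y.drop (y.length - B.length) :=
      (List.take_append_drop _ y).symm
    have hlen : (y.drop (y.length - B.length)).length = B.length := by
      simp; omega
    have key : (s ++ y.take (y.length - B.length)) ++ y.drop (y.length - B.length) = A ++ B := by
      rw [List.append_assoc, ← hy]; exact hs
    have := List.append_inj' key hlen
    have hfin : y = y.take (y.length - B.length) ++ B := by
      conv_lhs => rw [hy]
      rw [this.2]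
    refine ⟨y.take (y.length - B.length), ?_, hfin⟩
    rw [← this.1]; exact List.suffix_append _ _

lemma decS {P : α → ℕ} {t y : List α} {cs : List (List α)}
    (hc : ∀ c ∈ cs, parikh c = P) (ht : PSSub (parikh t) P)
    (hy : y <:+ cs.flatten ++ t) (hlen : t.length + pnorm P ≤ y.length) :
    ∃ (h' : List α) (cs' : List (List α)), y = h' ++ cs'.flatten ++ t ∧ (∀ c ∈ cs', parikh c = P) ∧ PSSub (parikh h') P := by
  induction cs with
  | nil =>
    exfalso
    have h1 := hy.length_le
    have h2 := length_lt_of_pssub ht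
    simp at h1
    omega
  | cons c cs ih =>
    rw [join_cons', List.append_assoc] at hy
    rcases suffix_split hy with hy' | ⟨c', hc', rfl⟩
    · obtain ⟨h', cs', h1, h2, h3⟩ := ih (fun d hd => hc d (by simp [hd])) hy'
      exact ⟨h', cs', h1, h2, h3⟩
    · by_cases hlc : c'.length = c.length
      · have : c' = c := hc'.eq_of_length hlc
        subst this
        refine ⟨[], c' :: cs, by simp, hc, ?_⟩
        refine pssub_of_le_of_lt (fun a => by simp [parikh]) ?_
        have := length_lt_of_pssub ht
        have : 0 < pnorm P := by omega
        simpa [pnorm_parikh] using this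
      · have hclen : c.length = pnorm P := core_length (hc c (by simp))
        have : PSSub (parikh c') P := by
          refine pssub_piece hc'.sublist ?_ ?_
          · rw [hc c (by simp)]; exact fun a => le_refl _
          · have := hc'.length_le; omega
        exact ⟨c', cs, by rw [List.append_assoc], fun d hd => hc d (by simp [hd]), this⟩

lemma decS' {P : α → ℕ} {h t y : List α} {cs : List (List α)}
    (hc : ∀ c ∈ cs, parikh c = P) (hh : PSSub (parikh h) P) (ht : PSSub (parikh t) P)
    (hy : y <:+ h ++ cs.flatten ++ t) (hlen : t.length + pnorm P ≤ y.length) :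
    ∃ (h' : List α) (cs' : List (List α)), y = h' ++ cs'.flatten ++ t ∧ (∀ c ∈ cs', parikh c = P) ∧ PSSub (parikh h') P := by
  rw [List.append_assoc] at hy
  rcases suffix_split hy with hy' | ⟨h', hh', rfl⟩
  · exact decS hc ht hy' hlen
  · refine ⟨h', cs, by rw [List.append_assoc], hc, ?_⟩
    refine pssub_piece hh'.sublist hh.1 ?_
    have h1 := hh'.length_le
    have h2 := length_lt_of_pssub hh
    omega
lemma decL {P : α → ℕ} {a : α} {x u0 um h t : List α} {CS cs : List (List α)}
    (hx : x = u0 ++ CS.flatten ++ um) (hCS : 2 ≤ CS.length)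
    (hCSc : ∀ c ∈ CS, parikh c = P)
    (hu0 : PSSub (parikh u0) P) (hum : PSSub (parikh um) P)
    (hzc : ∀ c ∈ cs, parikh c = P) (hzh : PSSub (parikh h) P) (hzt : PSSub (parikh t) P)
    (hsuf : (a :: x) <:+ h ++ cs.flatten ++ t) :
    ∃ (h' : List α) (cs' : List (List α)) (t' : List α),
      (a :: x) = h' ++ cs'.flatten ++ t' ∧ 2 ≤ cs'.length ∧ (∀ c ∈ cs', parikh c = P) ∧
      PSSub (parikh h') P ∧ PSSub (parikh t') P := by
  set p := pnorm P with hp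
  have hCSlen : CS.flatten.length = p * CS.length := join_length (fun c hc => core_length (hCSc c hc))
  have hxlen : x.length = u0.length + CS.flatten.length + um.length := by
    rw [hx, List.length_append, List.length_append]
  have htlen : t.length < p := length_lt_of_pssub hzt
  have hylen : t.length + p ≤ (a :: x).length := by
    have : 2 * p ≤ p * CS.length := by
      calc 2 * p = p * 2 := by ring
      _ ≤ p * CS.length := Nat.mul_le_mul_left p hCS
    simp only [List.length_cons]
    omega
  obtain ⟨h', cs', heq, hc', hh'⟩ := decS' hzc hzh hzt hsuf hylen
  rcases le_or_gt 2 cs'.length with h2 | h2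
  · exact ⟨h', cs', t, heq, h2, hc', hh', hzt⟩
  · have hcs'len : cs'.flatten.length = p * cs'.length := join_length (fun c hc => core_length (hc' c hc))
    have hh'len : h'.length < p := length_lt_of_pssub hh'
    have e1 : (a :: x).length = h'.length + cs'.flatten.length + t.length := by
      rw [heq, List.length_append, List.length_append]
    have hcs'p : p * cs'.length ≤ p * 1 := Nat.mul_le_mul_left p (by omega)
    have h2p : 2 * p ≤ p * CS.length := by
      calc 2 * p = p * 2 := by ring
      _ ≤ p * CS.length := Nat.mul_le_mul_left p hCS
    have lh' : u0.length + 1 ≤ h'.length := by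
      simp only [List.length_cons] at e1 hylen
      omega
    have hax : a :: x = (a :: u0) ++ CS.flatten ++ um := by rw [hx]; simp
    have hpre : a :: u0 = h'.take (u0.length + 1) := by
      have e2 : (a :: x).take (u0.length + 1) = a :: u0 := by
        rw [hax, List.append_assoc, List.take_append]
        simp
      have e3 : (a :: x).take (u0.length + 1) = h'.take (u0.length + 1) := by
        rw [heq, List.append_assoc, List.take_append]
        have : u0.length + 1 - h'.length = 0 := by omega
        rw [this]
        simp
      rw [← e2, e3]
    have hnew : PSSub (parikh (a :: u0)) P := by
      refine pssub_piece ?_ hh'.1 ?_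
      · rw [hpre]; exact (List.take_prefix _ _).sublist
      · simp only [List.length_cons]; omega
    exact ⟨a :: u0, CS, um, hax, hCS, hCSc, hnew, hum⟩

lemma decR {P : α → ℕ} {a : α} {x u0 um h t : List α} {CS cs : List (List α)}
    (hx : x = u0 ++ CS.flatten ++ um) (hCS : 2 ≤ CS.length)
    (hCSc : ∀ c ∈ CS, parikh c = P)
    (hu0 : PSSub (parikh u0) P) (hum : PSSub (parikh um) P)
    (hzc : ∀ c ∈ cs, parikh c = P) (hzh : PSSub (parikh h) P) (hzt : PSSub (parikh t) P)
    (hsuf : (x ++ [a]) <:+ h ++ cs.flatten ++ t) :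
    ∃ (h' : List α) (cs' : List (List α)) (t' : List α),
      (x ++ [a]) = h' ++ cs'.flatten ++ t' ∧ 2 ≤ cs'.length ∧ (∀ c ∈ cs', parikh c = P) ∧
      PSSub (parikh h') P ∧ PSSub (parikh t') P := by
  set p := pnorm P with hp
  have hCSlen : CS.flatten.length = p * CS.length := join_length (fun c hc => core_length (hCSc c hc))
  have hxlen : x.length = u0.length + CS.flatten.length + um.length := by
    rw [hx, List.length_append, List.length_append]
  have htlen : t.length < p := length_lt_of_pssub hzt
  have h2p : 2 * p ≤ p * CS.length := by
    calc 2 * p = p * 2 := by ring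
    _ ≤ p * CS.length := Nat.mul_le_mul_left p hCS
  have hylen : t.length + p ≤ (x ++ [a]).length := by
    simp only [List.length_append, List.length_cons, List.length_nil]
    omega
  obtain ⟨h', cs', heq, hc', hh'⟩ := decS' hzc hzh hzt hsuf hylen
  rcases le_or_gt 2 cs'.length with h2 | h2
  · exact ⟨h', cs', t, heq, h2, hc', hh', hzt⟩
  · have hcs'len : cs'.flatten.length = p * cs'.length := join_length (fun c hc => core_length (hc' c hc))
    have hh'len : h'.length < p := length_lt_of_pssub hh'
    have e1 : (x ++ [a]).length = h'.length + cs'.flatten.length + t.length := by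
      rw [heq, List.length_append, List.length_append]
    have hcs'p : p * cs'.length ≤ p * 1 := Nat.mul_le_mul_left p (by omega)
    have lt' : um.length + 2 ≤ t.length := by
      simp only [List.length_append, List.length_cons, List.length_nil] at e1 hylen
      omega
    have hax : x ++ [a] = u0 ++ CS.flatten ++ (um ++ [a]) := by rw [hx]; simp
    have hsuf1 : (um ++ [a]) <:+ (x ++ [a]) := by
      rw [hax, List.append_assoc]
      exact (List.suffix_append _ _).trans (List.suffix_append _ _)
    have hsuf2 : t <:+ (x ++ [a]) := by
      rw [heq, List.append_assoc]
      exact (List.suffix_append _ _).trans (List.suffix_append _ _)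
    have hst : (um ++ [a]) <:+ t := by
      refine suffix_trans_le hsuf1 hsuf2 ?_
      simp only [List.length_append, List.length_cons, List.length_nil]
      omega
    have hnew : PSSub (parikh (um ++ [a])) P := by
      refine pssub_piece hst.sublist hzt.1 ?_
      simp only [List.length_append, List.length_cons, List.length_nil]
      omega
    exact ⟨u0, CS, um ++ [a], hax, hCS, hCSc, hu0, hnew⟩
lemma join_nil' : ([] : List (List α)).flatten = [] := rfl

lemma join_append' (l₁ l₂ : List (List α)) : (l₁ ++ l₂).flatten = l₁.flatten ++ l₂.flatten := by
  induction l₁ with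
  | nil => rw [List.nil_append, join_nil', List.nil_append]
  | cons c l ih => rw [List.cons_append, join_cons', join_cons', ih, List.append_assoc]

lemma join_range_getD (l : List (List α)) :
    ((List.range l.length).map (fun i => l.getD i [])).flatten = l.flatten := by
  induction l with
  | nil => simp
  | cons a l ih =>
    rw [List.length_cons, List.range_succ_eq_map, List.map_cons, List.map_map]
    have : ((fun i => (a :: l).getD i []) ∘ Nat.succ) = fun i => l.getD i [] := by
      funext i; simp
    rw [this, join_cons', List.getD_cons_zero, ih, join_cons']

lemma dec_isPF {P : α → ℕ} {v h t : List α} {cs : List (List α)}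
    (hv : v = h ++ cs.flatten ++ t) (hc : ∀ c ∈ cs, parikh c = P)
    (hh : PSSub (parikh h) P) (ht : PSSub (parikh t) P) :
    IsPF P v (cs.length + 1) (fun i => (h :: (cs ++ [t])).getD i []) := by
  refine ⟨Nat.le_add_left 1 _, ?_, ?_, ?_, ?_⟩
  · have hl : (h :: (cs ++ [t])).length = cs.length + 1 + 1 := by simp
    rw [← hl, join_range_getD]
    rw [hv, join_cons', join_append', join_cons', join_nil', List.append_nil,
      List.append_assoc]
  · intro i hi0 hik
    obtain ⟨j, rfl⟩ : ∃ j, i = j + 1 := ⟨i - 1, by omega⟩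
    have hj : j < cs.length := by omega
    simp only [List.getD_cons_succ]
    rw [List.getD_append _ _ _ _ hj, List.getD_eq_getElem _ _ hj]
    exact hc _ (List.getElem_mem hj)
  · simpa only [List.getD_cons_zero] using hh
  · have : (h :: (cs ++ [t])).getD (cs.length + 1) [] = t := by
      simp only [List.getD_cons_succ]
      rw [List.getD_append_right _ _ _ _ (le_refl _)]
      simp
    simpa only [this] using ht

lemma isPF_dec {P : α → ℕ} {v : List α} {m : ℕ} {u : ℕ → List α} (h : IsPF P v m u) :
    ∃ cs : List (List α), cs.length = m - 1 ∧ v = u 0 ++ cs.flatten ++ u m ∧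
      ∀ c ∈ cs, parikh c = P := by
  obtain ⟨hm, hv, hcore, hh, ht⟩ := h
  obtain ⟨m', rfl⟩ : ∃ m', m = m' + 1 := ⟨m - 1, by omega⟩
  refine ⟨(List.range m').map (fun j => u (j + 1)), by simp, ?_, ?_⟩
  · rw [hv]
    have e1 : ((List.range (m' + 1 + 1)).map u).flatten
        = ((List.range (m' + 1)).map u).flatten ++ u (m' + 1) := by
      rw [List.range_succ, List.map_append]
      simp [List.flatten_append]
    have e2 : ((List.range (m' + 1)).map u).flatten
        = u 0 ++ ((List.range m').map (fun j => u (j + 1))).flatten := by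
      rw [List.range_succ_eq_map, List.map_cons, List.map_map, join_cons']
      congr 1
    rw [e1, e2]
  · intro c hc
    simp only [List.mem_map, List.mem_range] at hc
    obtain ⟨j, hj, rfl⟩ := hc
    exact hcore _ (Nat.succ_pos j) (by omega)

lemma APeriodic_iff {P : α → ℕ} {w : List α} {i j : ℕ} :
    APeriodic P w i j ↔ ∃ (u0 : List α) (cs : List (List α)) (um : List α),
      frag w i j = u0 ++ cs.flatten ++ um ∧ 2 ≤ cs.length ∧ (∀ c ∈ cs, parikh c = P) ∧
      PSSub (parikh u0) P ∧ PSSub (parikh um) P := by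
  constructor
  · rintro ⟨m, u, hm, hpf⟩
    obtain ⟨cs, hlen, hveq, hcs⟩ := isPF_dec hpf
    exact ⟨u 0, cs, u m, hveq, by omega, hcs, hpf.2.2.2.1, hpf.2.2.2.2⟩
  · rintro ⟨u0, cs, um, hveq, h2, hcs, hh, ht⟩
    exact ⟨cs.length + 1, _, by omega, dec_isPF hveq hcs hh ht⟩

lemma HasAnchPeriod_elim {P : α → ℕ} {w : List α} {s j k : ℕ}
    (h : HasAnchPeriod P w s j k) :
    ∃ (u0 : List α) (cs : List (List α)) (um : List α),
      frag w s j = u0 ++ cs.flatten ++ um ∧ (∀ c ∈ cs, parikh c = P) ∧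
      PSSub (parikh u0) P ∧ PSSub (parikh um) P := by
  obtain ⟨m, u, hpf, _⟩ := h
  obtain ⟨cs, hlen, hveq, hcs⟩ := isPF_dec hpf
  exact ⟨u 0, cs, u m, hveq, hcs, hpf.2.2.2.1, hpf.2.2.2.2⟩

lemma PeriodicAnch.aperiodic {P : α → ℕ} {w : List α} {i j k : ℕ}
    (h : PeriodicAnch P w i j k) : APeriodic P w i j := by
  obtain ⟨m, u, hm, hpf, _⟩ := h; exact ⟨m, u, hm, hpf⟩

lemma APeriodic.anch {P : α → ℕ} {w : List α} {s j : ℕ} (h : APeriodic P w s j) :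
    ∃ k, PeriodicAnch P w s j k := by
  obtain ⟨m, u, hm, hpf⟩ := h
  exact ⟨s + (u 0).length, m, u, hm, hpf, rfl⟩

lemma APeriodic.hasAnch {P : α → ℕ} {w : List α} {s j : ℕ} (h : APeriodic P w s j) :
    ∃ k, HasAnchPeriod P w s j k := by
  obtain ⟨m, u, hm, hpf⟩ := h
  exact ⟨s + (u 0).length, m, u, hpf, rfl⟩

lemma frag_suffix {w : List α} {s b e : ℕ} (h : s ≤ b) : frag w b e <:+ frag w s e := by
  have key : frag w b e = (frag w s e).drop (b - s) := by
    unfold frag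
    rw [List.drop_take, List.drop_drop, show s + (b - s) = b by omega,
      show e + 1 - s - (b - s) = e + 1 - b by omega]
  rw [key]; exact List.drop_suffix _ _

lemma frag_cons {w : List α} {b e : ℕ} (hb : b < w.length) (hbe : b ≤ e) :
    frag w b e = w[b] :: frag w (b + 1) e := by
  unfold frag
  rw [List.drop_eq_getElem_cons hb, show e + 1 - b = (e + 1 - (b + 1)) + 1 by omega,
    List.take_succ_cons]

lemma frag_snoc {w : List α} {b e : ℕ} (h1 : b ≤ e + 1) (h2 : e + 1 < w.length) :
    frag w b (e + 1) = frag w b e ++ [w[e + 1]] := by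
  unfold frag
  rw [show e + 1 + 1 - b = (e + 1 - b) + 1 by omega, List.take_succ]
  congr 1
  rw [List.getElem?_drop, show b + (e + 1 - b) = e + 1 by omega,
    List.getElem?_eq_getElem h2]
  rfl

lemma frag_snoc' {w : List α} {b e : ℕ} (h0 : 1 ≤ e) (h1 : b ≤ e) (h2 : e < w.length) :
    frag w b e = frag w b (e - 1) ++ [w[e]] := by
  obtain ⟨e', rfl⟩ : ∃ e', e = e' + 1 := ⟨e - 1, by omega⟩
  simpa using frag_snoc (w := w) (b := b) (e := e') (by omega) h2

lemma le_Bfun_iff {P : α → ℕ} {w : List α} {n k b : ℕ} :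
    (b : ℕ∞) ≤ Bfun P w n k ↔ ∀ s, s ≤ n + 1 → HasAnchPeriod P w s n k → b ≤ s := by
  unfold Bfun
  rw [le_sInf_iff]
  constructor
  · intro H s hs ha
    have := H (s : ℕ∞) ⟨s, rfl, hs, ha⟩
    exact_mod_cast this
  · rintro H x ⟨s, rfl, hs, ha⟩
    exact_mod_cast H s hs ha

lemma lt_Bfun_iff {P : α → ℕ} {w : List α} {n k b : ℕ} :
    (b : ℕ∞) < Bfun P w n k ↔ ∀ s, s ≤ n + 1 → HasAnchPeriod P w s n k → b < s := by
  constructor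
  · intro H s hs ha
    have h1 : Bfun P w n k ≤ (s : ℕ∞) := sInf_le ⟨s, rfl, hs, ha⟩
    exact_mod_cast H.trans_le h1
  · intro H
    have h1 : ((b + 1 : ℕ) : ℕ∞) ≤ Bfun P w n k :=
      le_Bfun_iff.mpr (fun s hs ha => H s hs ha)
    exact lt_of_lt_of_le (by exact_mod_cast Nat.lt_succ_self b) h1
/-- A fragment w[b..i-1] is an abelian run with period P iff it is an anchored
run with period P for some anchor and for every residue k', B_{i-1}[k'] ≥ b and
B_i[k'] > b. -/
theorem abelianRun_iff_B (P : α → ℕ) (w : List α) (i b : ℕ)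
    (hi1 : 1 ≤ i) (hi2 : i < w.length) :
    AbelianRun P w b (i - 1) ↔
      ((∃ k, AnchoredRun P w b (i - 1) k) ∧
       ∀ k', (b : ℕ∞) ≤ Bfun P w (i - 1) k' ∧ (b : ℕ∞) < Bfun P w i k') := by
  have hii : i - 1 + 1 = i := by omega
  constructor
  · rintro ⟨hb, hjw, hA3, hA4, hA5⟩
    obtain ⟨k, hk⟩ := hA3.anch
    refine ⟨⟨k, hb, hjw, hk, ?_, ?_⟩, ?_⟩
    · rcases hA4 with h0 | h4
      · exact Or.inl h0
      · exact Or.inr (fun hc => h4 hc.aperiodic)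
    · rcases hA5 with h0 | h5
      · exact Or.inl h0
      · exact Or.inr (fun hc => h5 hc.aperiodic)
    · intro k'
      obtain ⟨u0, CS, um, hxeq, hCS2, hCSc, hu0, hum⟩ := APeriodic_iff.mp hA3
      constructor
      · rw [le_Bfun_iff]
        intro s hs hanch
        by_contra hlt
        push_neg at hlt
        have hb1 : 1 ≤ b := by omega
        have h4 : ¬ APeriodic P w (b - 1) (i - 1) := by
          rcases hA4 with h0 | h4
          · omega
          · exact h4
        apply h4
        obtain ⟨h, cs, t, hzeq, hzc, hzh, hzt⟩ := HasAnchPeriod_elim hanch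
        have hbw : b - 1 < w.length := by omega
        have hcons : frag w (b - 1) (i - 1) = w[b - 1] :: frag w b (i - 1) := by
          rw [frag_cons hbw (by omega), show b - 1 + 1 = b by omega]
        have hsuf : frag w (b - 1) (i - 1) <:+ frag w s (i - 1) :=
          frag_suffix (by omega)
        rw [hzeq, hcons] at hsuf
        obtain ⟨h', cs', t', heq, h2, hc', hh', ht'⟩ :=
          decL hxeq hCS2 hCSc hu0 hum hzc hzh hzt hsuf
        rw [APeriodic_iff]
        exact ⟨h', cs', t', by rw [hcons, heq], h2, hc', hh', ht'⟩
      · rw [lt_Bfun_iff]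
        intro s hs hanch
        by_contra hle
        push_neg at hle
        have h5 : ¬ APeriodic P w b i := by
          rcases hA5 with h0 | h5
          · omega
          · rwa [hii] at h5
        apply h5
        obtain ⟨h, cs, t, hzeq, hzc, hzh, hzt⟩ := HasAnchPeriod_elim hanch
        have hsnoc : frag w b i = frag w b (i - 1) ++ [w[i]] :=
          frag_snoc' hi1 (by omega) hi2
        have hsuf : frag w b i <:+ frag w s i := frag_suffix hle
        rw [hzeq, hsnoc] at hsuf
        obtain ⟨h', cs', t', heq, h2, hc', hh', ht'⟩ :=
          decR hxeq hCS2 hCSc hu0 hum hzc hzh hzt hsuf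
        rw [APeriodic_iff]
        exact ⟨h', cs', t', by rw [hsnoc, heq], h2, hc', hh', ht'⟩
  · rintro ⟨⟨k, hb, hjw, hper, _, _⟩, hB⟩
    refine ⟨hb, hjw, hper.aperiodic, ?_, ?_⟩
    · by_cases hb0 : b = 0
      · exact Or.inl hb0
      · right
        intro hA
        obtain ⟨k'', hk''⟩ := hA.hasAnch
        have h1 := le_Bfun_iff.mp (hB k'').1 (b - 1) (by omega) hk''
        omega
    · right
      intro hA
      rw [hii] at hA
      obtain ⟨k'', hk''⟩ := hA.hasAnch
      have h1 := lt_Bfun_iff.mp (hB k'').2 b (by omega) hk''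
      omega
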